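/- A nonzero homogeneous polynomial $\Phi \in \mathbb{F}_q[\xi_0,\ldots,\xi_n]$ of degree at most $q$ cannot vanish at every point of $\mathbb{P}^n(\mathbb{F}_q)$; i.e., there exists $\mathbf{a} \in \mathbb{F}_q^{n+1} \setminus \{0\}$ with $\Phi(\mathbf{a}) \neq 0$. -/

import Mathlib

open MvPolynomial Finsupp

lemma degree_single_aux {m : ℕ} (i : Fin (m + 1)) (k : ℕ) :
    Finsupp.degree (Finsupp.single i k) = k := by
  rcases eq_or_ne k 0 with rfl | hk
  · simp
  · rw [Finsupp.degree_apply, Finsupp.support_single_ne_zero i hk]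
    simp

lemma eq_single_aux {m q : ℕ} (s : Fin (m + 1) →₀ ℕ) (i : Fin (m + 1))
    (hq : q ≠ 0) (hdeg : Finsupp.degree s = q) (hi : q ≤ s i) : s = Finsupp.single i q := by
  have hle : s i ≤ Finsupp.degree s := Finsupp.le_degree i s
  ext j
  rcases eq_or_ne j i with rfl | hj
  · simp only [Finsupp.single_eq_same]; omega
  · rw [Finsupp.single_eq_of_ne hj]
    by_contra hsj
    have hjs : j ∈ s.support := by simpa using hsj
    have his : i ∈ s.support := by simp; omega
    have hsub : ({i, j} : Finset (Fin (m + 1))) ⊆ s.support := by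
      intro x hx; simp at hx; rcases hx with rfl | rfl <;> assumption
    have hsum : ∑ x ∈ ({i, j} : Finset (Fin (m + 1))), s x ≤ ∑ x ∈ s.support, s x :=
      Finset.sum_le_sum_of_subset hsub
    rw [Finset.sum_pair hj.symm] at hsum
    rw [Finsupp.degree_apply] at hdeg
    omega

/-- A nonzero homogeneous polynomial over `𝔽_q` of degree at most `q` cannot vanish at
every point of `ℙⁿ(𝔽_q)`: there is a nonzero `a ∈ 𝔽_q^{n+1}` with `Φ(a) ≠ 0`. -/
theorem exists_nonzero_point_of_homogeneous (q n d : ℕ) [Fact q.Prime]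
    (Φ : MvPolynomial (Fin (n + 1)) (ZMod q))
    (hΦ : Φ ≠ 0) (hhom : Φ.IsHomogeneous d) (hdeg : d ≤ q) :
    ∃ a : Fin (n + 1) → ZMod q, a ≠ 0 ∧ MvPolynomial.eval a Φ ≠ 0 := by
  classical
  by_contra hcon
  push_neg at hcon
  have hq2 : 2 ≤ q := (Fact.out : q.Prime).two_le
  rcases Nat.eq_zero_or_pos d with rfl | hd1
  · -- degree 0 : Φ is a nonzero constant
    have hC : Φ = C (coeff 0 Φ) := by
      ext m
      rcases eq_or_ne m 0 with rfl | hm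
      · simp
      · rw [coeff_C, if_neg (by simpa using (Ne.symm hm))]
        exact hhom.coeff_eq_zero (by rwa [Ne, Finsupp.degree_eq_zero_iff])
    have h1 : (fun _ : Fin (n + 1) => (1 : ZMod q)) ≠ 0 := by
      intro h
      exact one_ne_zero (congrFun h 0)
    have := hcon _ h1
    rw [hC] at this
    simp only [eval_C] at this
    exact hΦ (by rw [hC, this, map_zero])
  · -- degree ≥ 1 : Φ vanishes everywhere
    have h0 : ∀ a : Fin (n + 1) → ZMod q, eval a Φ = 0 := by
      intro a
      rcases eq_or_ne a 0 with rfl | ha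
      · rw [eval_zero, constantCoeff_eq]
        exact hhom.coeff_eq_zero (by simp; omega)
      · exact hcon a ha
    set c : Fin (n + 1) → ZMod q := fun i => coeff (Finsupp.single i q) Φ with hc
    set P : MvPolynomial (Fin (n + 1)) (ZMod q) := ∑ i, C (c i) * X i ^ q with hP
    set L : MvPolynomial (Fin (n + 1)) (ZMod q) := ∑ i, C (c i) * X i with hL
    have hkey : Φ - P + L = 0 := by
      apply MvPolynomial.eq_zero_of_eval_eq_zero
      · intro v
        rw [map_add, map_sub, h0, hP, hL, map_sum, map_sum]
        simp only [map_mul, eval_C, map_pow, eval_X, ZMod.pow_card]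
        ring
      · rw [ZMod.card, mem_restrictDegree]
        intro s hs i
        by_contra hsi
        push_neg at hsi
        have hqs : q ≤ s i := by omega
        apply MvPolynomial.mem_support_iff.mp hs
        have hLc : coeff s L = 0 := by
          rw [hL, coeff_sum]
          refine Finset.sum_eq_zero fun j _ => ?_
          rw [coeff_C_mul, coeff_X', if_neg, mul_zero]
          intro h
          have h1 : (Finsupp.single j 1) i ≤ 1 := by
            rcases eq_or_ne j i with rfl | hji
            · simp
            · rw [Finsupp.single_eq_of_ne hji.symm]; omega
          rw [h] at h1
          omega
        by_cases hss : ∃ j, s = Finsupp.single j q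
        · obtain ⟨j, rfl⟩ := hss
          have hPc : coeff (Finsupp.single j q) P = c j := by
            rw [hP, coeff_sum]
            rw [Finset.sum_eq_single j]
            · rw [coeff_C_mul, coeff_X_pow, if_pos rfl, mul_one]
            · intro k _ hk
              rw [coeff_C_mul, coeff_X_pow, if_neg, mul_zero]
              intro h
              exact hk ((Finsupp.single_left_inj (by omega)).mp h)
            · intro h
              exact absurd (Finset.mem_univ j) h
          rw [coeff_add, coeff_sub, hPc, hLc, hc]
          ring
        · push_neg at hss
          have hΦc : coeff s Φ = 0 := by
            by_contra hne
            have hds : Finsupp.degree s = d := by rw [Finsupp.degree_eq_weight_one]; exact hhom hne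
            have : q ≤ Finsupp.degree s := le_trans hqs (Finsupp.le_degree i s)
            have hdq : d = q := by omega
            exact hss i (eq_single_aux s i (by omega) (by omega) hqs)
          have hPc : coeff s P = 0 := by
            rw [hP, coeff_sum]
            refine Finset.sum_eq_zero fun j _ => ?_
            rw [coeff_C_mul, coeff_X_pow, if_neg (fun h => hss j h.symm), mul_zero]
          rw [coeff_add, coeff_sub, hΦc, hPc, hLc]
          ring
    have hPhi : Φ = P - L := by linear_combination hkey
    have hci : ∀ i, c i = 0 := by
      intro i
      by_cases hd1' : d = 1
      · have h1 : coeff (Finsupp.single i q) Φ = 0 :=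
          hhom.coeff_eq_zero (by rw [degree_single_aux]; omega)
        exact h1
      · have h1 : coeff (Finsupp.single i 1) Φ = 0 :=
          hhom.coeff_eq_zero (by rw [degree_single_aux]; omega)
        have hPc : coeff (Finsupp.single i 1) P = 0 := by
          rw [hP, coeff_sum]
          refine Finset.sum_eq_zero fun j _ => ?_
          rw [coeff_C_mul, coeff_X_pow, if_neg, mul_zero]
          intro h
          have h2 : (Finsupp.single j q) j = (Finsupp.single i 1) j := by rw [h]
          rcases eq_or_ne i j with rfl | hij
          · rw [Finsupp.single_eq_same, Finsupp.single_eq_same] at h2; omega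
          · rw [Finsupp.single_eq_same, Finsupp.single_eq_of_ne hij.symm] at h2; omega
        have hLc : coeff (Finsupp.single i 1) L = c i := by
          rw [hL, coeff_sum]
          rw [Finset.sum_eq_single i]
          · rw [coeff_C_mul, coeff_X', if_pos rfl, mul_one]
          · intro k _ hk
            rw [coeff_C_mul, coeff_X', if_neg, mul_zero]
            intro h
            exact hk ((Finsupp.single_left_inj one_ne_zero).mp h)
          · intro h
            exact absurd (Finset.mem_univ i) h
        have := congrArg (coeff (Finsupp.single i 1)) hPhi
        rw [h1, coeff_sub, hPc, hLc] at this
        linear_combination this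
    apply hΦ
    rw [hPhi, hP, hL]
    simp [hci]
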